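/- Let (C, ▷, †) be a guarded Conway category and define Tr_† as above. Then Tr_† satisfies superposing: for f : ▷X × A → X × B, Tr^X_{A×C, B×C}(f × id_C) = Tr^X_{A,B}(f) × id_C, where f × id_C is interpreted along the canonical isomorphism ▷X × (A × C) ≅ (▷X × A) × C. -/

import Mathlib

open CategoryTheory CategoryTheory.Limits

/-- The trace induced by a guarded dagger:
`Tr^X_{A,B}(f) = π_r ∘ f ∘ (p_X × id_A) ∘ ⟨(π_ℓ ∘ f)†, id_A⟩`. -/
noncomputable def TrD {C : Type*} [Category C] [HasFiniteProducts C]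
    (F : C ⥤ C) (p : 𝟭 C ⟶ F)
    (dag : ∀ {X Y : C}, (F.obj X ⨯ Y ⟶ X) → (Y ⟶ X))
    {X A B : C} (f : F.obj X ⨯ A ⟶ X ⨯ B) : A ⟶ B :=
  prod.lift (dag (f ≫ prod.fst)) (𝟙 A) ≫ prod.map (p.app X) (𝟙 A) ≫ f ≫ prod.snd

/-- In a guarded Conway category `(C, ▷, †)`, the induced trace `Tr_†` satisfies
superposing: `Tr^X_{A×D, B×D}(f × id_D) = Tr^X_{A,B}(f) × id_D`, where `f × id_D` is
transported along the canonical associativity isomorphisms. -/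
theorem stmt14 {C : Type*} [Category C] [HasFiniteProducts C]
    (F : C ⥤ C) (p : 𝟭 C ⟶ F)
    (dag : ∀ {X Y : C}, (F.obj X ⨯ Y ⟶ X) → (Y ⟶ X))
    (hfix : ∀ {X Y : C} (f : F.obj X ⨯ Y ⟶ X),
      dag f = prod.lift (dag f) (𝟙 Y) ≫ prod.map (p.app X) (𝟙 Y) ≫ f)
    (hparam : ∀ {X Y Z : C} (f : F.obj X ⨯ Y ⟶ X) (h : Z ⟶ Y),
      h ≫ dag f = dag (prod.map (𝟙 (F.obj X)) h ≫ f))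
    (hcomp : ∀ {X Y Z : C} (f : F.obj X ⨯ Y ⟶ Z) (g : Z ⟶ X),
      dag (f ≫ g) = dag (prod.map (F.map g) (𝟙 Y) ≫ f) ≫ g)
    (hdd : ∀ {X Y : C} (f : F.obj X ⨯ (F.obj X ⨯ Y) ⟶ X),
      dag (dag f) =
        dag (prod.lift (prod.fst : F.obj X ⨯ Y ⟶ F.obj X) (𝟙 (F.obj X ⨯ Y)) ≫ f)) :
    ∀ {X A B D : C} (f : F.obj X ⨯ A ⟶ X ⨯ B),
      TrD F p @dag ((prod.associator (F.obj X) A D).inv ≫ prod.map f (𝟙 D) ≫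
          (prod.associator X B D).hom)
        = prod.map (TrD F p @dag f) (𝟙 D) := by
  intro X A B D f
  have h1 : ((prod.associator (F.obj X) A D).inv ≫ prod.map f (𝟙 D) ≫
      (prod.associator X B D).hom) ≫ prod.fst
      = prod.map (𝟙 (F.obj X)) prod.fst ≫ (f ≫ prod.fst) := by
    have : (prod.lift prod.fst (prod.snd ≫ prod.fst) :
        F.obj X ⨯ A ⨯ D ⟶ F.obj X ⨯ A) = prod.map (𝟙 (F.obj X)) prod.fst := by
      ext <;> simp [prod.lift_fst, prod.lift_snd]
    simp [reassoc_of% this, prod.lift_fst, prod.lift_fst_assoc]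
  unfold TrD
  rw [h1, ← hparam]
  ext <;> simp [prod.lift_fst_assoc, prod.lift_snd_assoc, prod.lift_fst, prod.lift_snd]
  simp only [← Category.assoc]
  congr 1
  ext <;> simp [prod.lift_fst, prod.lift_snd, prod.lift_snd_assoc]
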